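/- Let G be a simple graph with n ≥ 3 vertices, m edges, and ordered degree sequence d_1 ≥ d_2 ≥ ... ≥ d_n. Then M_1(G) ≥ 4m²/n + (1/2)(d_1 − d_2)² + (2n/(n−2))·(2m/n − (d_1 + d_2)/2)². -/
import Mathlib


open Finset

theorem stmt7 (n : ℕ) (hn : 3 ≤ n) {V : Type*} [Fintype V] [DecidableEq V]
    (G : SimpleGraph V) [DecidableRel G.Adj]
    (m : ℕ) (hm : m = G.edgeFinset.card)
    (e : Fin n ≃ V) (d : Fin n → ℕ) (hd : ∀ i, d i = G.degree (e i))
    (hsort : Antitone d) :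
    ∑ v : V, (G.degree v : ℝ) ^ 2 ≥
      4 * (m : ℝ) ^ 2 / (n : ℝ)
      + (1 / 2) * ((d ⟨0, by omega⟩ : ℝ) - (d ⟨1, by omega⟩ : ℝ)) ^ 2
      + (2 * (n : ℝ) / ((n : ℝ) - 2)) *
          (2 * (m : ℝ) / (n : ℝ)
            - ((d ⟨0, by omega⟩ : ℝ) + (d ⟨1, by omega⟩ : ℝ)) / 2) ^ 2 := by
  have hn3 : (3:ℝ) ≤ (n:ℝ) := by exact_mod_cast hn
  have hn0 : (0:ℝ) < n := by linarith
  have hn2 : (0:ℝ) < (n:ℝ) - 2 := by linarith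
  set i0 : Fin n := ⟨0, by omega⟩ with hi0
  set i1 : Fin n := ⟨1, by omega⟩ with hi1
  have hne : i1 ≠ i0 := by simp [hi0, hi1, Fin.ext_iff]
  set f : Fin n → ℝ := fun i => (d i : ℝ) with hf
  set s : Finset (Fin n) := (univ.erase i0).erase i1 with hs
  have hmem1 : i1 ∈ univ.erase i0 := by simp [hne]
  have hcard : (s.card : ℝ) = (n:ℝ) - 2 := by
    have : s.card = n - 2 := by
      rw [hs, card_erase_of_mem hmem1, card_erase_of_mem (mem_univ i0),
        card_univ, Fintype.card_fin]
      omega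
    rw [this]
    have : 2 ≤ n := by omega
    push_cast [this]
    ring
  -- sum of degrees over Fin n equals 2m
  have hsumd : ∑ i, f i = 2 * (m:ℝ) := by
    have h1 : ∑ v : V, (G.degree v : ℝ) = 2 * (m:ℝ) := by
      rw [hm]
      exact_mod_cast congrArg (Nat.cast : ℕ → ℝ) (G.sum_degrees_eq_twice_card_edges)
    rw [← h1, ← Equiv.sum_comp e fun v => ((G.degree v : ℝ))]
    simp [hf, hd]
  -- sum of squares equality
  have hsq : ∑ v : V, (G.degree v : ℝ) ^ 2 = ∑ i, f i ^ 2 := by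
    rw [← Equiv.sum_comp e fun v => ((G.degree v : ℝ))^2]
    simp [hf, hd]
  -- split the sums
  have hsplit : ∑ i, f i = f i0 + f i1 + ∑ i ∈ s, f i := by
    rw [← Finset.sum_erase_add univ f (mem_univ i0),
        ← Finset.sum_erase_add _ f hmem1, ← hs]
    ring
  have hsplitsq : ∑ i, f i ^ 2 = f i0 ^ 2 + f i1 ^ 2 + ∑ i ∈ s, f i ^ 2 := by
    rw [← Finset.sum_erase_add univ (fun i => f i ^ 2) (mem_univ i0),
        ← Finset.sum_erase_add _ (fun i => f i ^ 2) hmem1, ← hs]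
    ring
  have hCS : (∑ i ∈ s, f i) ^ 2 ≤ ((n:ℝ) - 2) * ∑ i ∈ s, f i ^ 2 := by
    have := sq_sum_le_card_mul_sum_sq (s := s) (f := f)
    rw [hcard] at this
    exact this
  have hR : ∑ i ∈ s, f i = 2 * (m:ℝ) - f i0 - f i1 := by
    rw [hsplit] at hsumd; linarith
  rw [hsq, hsplitsq]
  rw [hR] at hCS
  have key : 4 * (m : ℝ) ^ 2 / (n : ℝ)
      + (1 / 2) * (f i0 - f i1) ^ 2
      + (2 * (n : ℝ) / ((n : ℝ) - 2)) *
          (2 * (m : ℝ) / (n : ℝ) - (f i0 + f i1) / 2) ^ 2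
      = f i0 ^ 2 + f i1 ^ 2 + (2 * (m:ℝ) - f i0 - f i1) ^ 2 / ((n:ℝ) - 2) := by
    field_simp
    ring
  have h2 : (2 * (m:ℝ) - f i0 - f i1) ^ 2 / ((n:ℝ) - 2) ≤ ∑ i ∈ s, f i ^ 2 := by
    rw [div_le_iff₀ hn2]
    linarith
  calc 4 * (m : ℝ) ^ 2 / (n : ℝ)
      + (1 / 2) * (f i0 - f i1) ^ 2
      + (2 * (n : ℝ) / ((n : ℝ) - 2)) *
          (2 * (m : ℝ) / (n : ℝ) - (f i0 + f i1) / 2) ^ 2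
      = f i0 ^ 2 + f i1 ^ 2 + (2 * (m:ℝ) - f i0 - f i1) ^ 2 / ((n:ℝ) - 2) := key
    _ ≤ f i0 ^ 2 + f i1 ^ 2 + ∑ i ∈ s, f i ^ 2 := by linarith
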